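/- arXiv:2309.08884 — 3 statements merged into one kernel-verified Lean document; each statement's English description precedes it below -/
import Mathlib

section
/- Let S be a real random variable with mean S* and standard deviation σ, and let 0 < ε < 1/4. With S̄ = S − S* and Q_q the quantile function of S̄, the truncated expectation satisfies |E[(Q_{2ε}(S̄) − S̄)·1_{S̄ ≤ Q_{2ε}(S̄)}]| ≤ σ√(8ε). -/
open MeasureTheory ProbabilityTheory

private lemma aux_amgm (t x : ℝ) (ht : 0 < t) : |x| ≤ (t * x^2 + 1/t)/2 := by
  have h3 : (1/t)*t = 1 := by field_simp
  have key : ∀ y : ℝ, y^2 = x^2 → y ≤ (t * x^2 + 1/t)/2 := by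
    intro y hy
    rw [← hy, le_div_iff₀ (show (0:ℝ) < 2 by norm_num), ← mul_le_mul_iff_of_pos_right ht]
    nlinarith [sq_nonneg (t*y - 1)]
  rcases abs_choice x with h | h <;> rw [h]
  · exact key x rfl
  · exact key (-x) (by ring)

/-- Bound on the lower truncated expectation:
|E[(Q_{2ε}(S̄) − S̄)·1_{S̄ ≤ Q_{2ε}(S̄)}]| ≤ σ√(8ε). -/
theorem truncated_expectation_bound {Ω : Type*} [MeasureSpace Ω]
    [IsProbabilityMeasure (ℙ : Measure Ω)]
    (S : Ω → ℝ) (hS : Measurable S) (hS2 : MemLp S 2 ℙ)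
    (Sstar σ ε : ℝ) (hσ0 : 0 ≤ σ) (hε0 : 0 < ε) (hε : ε < 1/4)
    (hmean : ∫ ω, S ω ∂ℙ = Sstar)
    (hvar : variance S ℙ = σ^2)
    (Q : ℝ → ℝ)
    (hQdef : ∀ q, 0 < q → q < 1 →
      Q q = sSup {M : ℝ | (1 - q) ≤ (ℙ {ω | S ω - Sstar ≥ M}).toReal})
    (hQprob : ∀ q, 0 < q → q < 1 →
      (ℙ {ω | S ω - Sstar ≥ Q q}).toReal = 1 - q) :
    |∫ ω, (Q (2*ε) - (S ω - Sstar)) *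
        Set.indicator {ω | S ω - Sstar ≤ Q (2*ε)} (fun _ => (1:ℝ)) ω ∂ℙ| ≤
      σ * Real.sqrt (8*ε) := by
  set c := Q (2*ε) with hcdef
  set X : Ω → ℝ := fun ω => S ω - Sstar with hXdef
  have hXmeas : Measurable X := hS.sub measurable_const
  have hX2 : MemLp X 2 ℙ := hS2.sub (memLp_const Sstar)
  have hXsq : Integrable (fun ω => X ω ^ 2) ℙ := by
    have := hX2.integrable_sq
    simpa [sq] using this
  have hε2 : (0:ℝ) < 2*ε := by linarith
  have hε2' : 2*ε < 1 := by linarith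
  have hprob : (ℙ {ω | X ω ≥ c}).toReal = 1 - 2*ε := hQprob _ hε2 hε2'
  -- second moment
  have hEX2 : ∫ ω, X ω ^ 2 ∂ℙ = σ ^ 2 := by
    rw [← hvar, variance_eq_integral hS2.aemeasurable, hmean]
  -- measurability
  have hBmeas : MeasurableSet {ω | X ω ≥ c} := measurableSet_le measurable_const hXmeas
  have hAmeas : MeasurableSet {ω | X ω < c} := measurableSet_lt hXmeas measurable_const
  have hAcompl : {ω | X ω < c} = {ω | X ω ≥ c}ᶜ := by
    ext ω; simp [not_le]
  have hPA : (ℙ {ω | X ω < c}).toReal = 2*ε := by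
    rw [hAcompl, measure_compl hBmeas (measure_ne_top _ _), measure_univ,
      ENNReal.toReal_sub_of_le prob_le_one (by simp), hprob]
    simp
  have hind : Integrable (Set.indicator {ω | X ω < c} (fun _ => (1:ℝ))) ℙ :=
    (integrable_const 1).indicator hAmeas
  have hindB : Integrable (Set.indicator {ω | X ω ≥ c} (fun _ => (1:ℝ))) ℙ :=
    (integrable_const 1).indicator hBmeas
  have hind_int : ∫ ω, Set.indicator {ω | X ω < c} (fun _ => (1:ℝ)) ω ∂ℙ = 2*ε := by
    rw [integral_indicator_const (1:ℝ) hAmeas, measureReal_def, hPA]; simp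
  -- Chebyshev: c^2 * (2ε) ≤ σ^2
  have hcheb : c^2 * (2*ε) ≤ σ^2 := by
    rcases lt_trichotomy c 0 with hc | hc | hc
    · -- use the set {X < c}
      have hpt : ∀ ω, Set.indicator {ω | X ω < c} (fun _ => c^2) ω ≤ X ω ^ 2 := by
        intro ω
        by_cases h : X ω < c
        · rw [Set.indicator_of_mem (show ω ∈ {ω | X ω < c} from h)]
          nlinarith [h, hc]
        · rw [Set.indicator_of_notMem (show ω ∉ {ω | X ω < c} from h)]; positivity
      have := integral_mono ((integrable_const (c^2)).indicator hAmeas) hXsq hpt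
      rw [integral_indicator_const (c^2) hAmeas, measureReal_def, hPA, hEX2] at this
      rw [smul_eq_mul] at this
      nlinarith [this]
    · simp [hc]; positivity
    · have hpt : ∀ ω, Set.indicator {ω | X ω ≥ c} (fun _ => c^2) ω ≤ X ω ^ 2 := by
        intro ω
        by_cases h : X ω ≥ c
        · rw [Set.indicator_of_mem (show ω ∈ {ω | X ω ≥ c} from h)]
          nlinarith [h, hc]
        · rw [Set.indicator_of_notMem (show ω ∉ {ω | X ω ≥ c} from h)]; positivity
      have := integral_mono ((integrable_const (c^2)).indicator hBmeas) hXsq hpt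
      rw [integral_indicator_const (c^2) hBmeas, measureReal_def, hprob, hEX2] at this
      simp only [smul_eq_mul] at this
      nlinarith [this, sq_nonneg c]
  -- rewrite the integrand with the strict set
  have hrw : ∀ ω, (c - X ω) * Set.indicator {ω | X ω ≤ c} (fun _ => (1:ℝ)) ω
      = (c - X ω) * Set.indicator {ω | X ω < c} (fun _ => (1:ℝ)) ω := by
    intro ω
    rcases lt_trichotomy (X ω) c with h | h | h
    · rw [Set.indicator_of_mem (show ω ∈ {ω | X ω ≤ c} from h.le),
        Set.indicator_of_mem (show ω ∈ {ω | X ω < c} from h)]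
    · simp [h]
    · rw [Set.indicator_of_notMem (show ω ∉ {ω | X ω ≤ c} from not_le.mpr h),
        Set.indicator_of_notMem (show ω ∉ {ω | X ω < c} from not_lt.mpr h.le)]
  have hIeq : ∫ ω, (c - (S ω - Sstar)) *
        Set.indicator {ω | S ω - Sstar ≤ c} (fun _ => (1:ℝ)) ω ∂ℙ
      = ∫ ω, (c - X ω) * Set.indicator {ω | X ω < c} (fun _ => (1:ℝ)) ω ∂ℙ :=
    integral_congr_ae (ae_of_all _ fun ω => hrw ω)
  have hf_nonneg : ∀ ω, 0 ≤ (c - X ω) * Set.indicator {ω | X ω < c} (fun _ => (1:ℝ)) ω := by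
    intro ω
    by_cases h : X ω < c
    · rw [Set.indicator_of_mem (show ω ∈ {ω | X ω < c} from h)]; nlinarith [h]
    · rw [Set.indicator_of_notMem (show ω ∉ {ω | X ω < c} from h)]; simp
  rw [hIeq, abs_of_nonneg (integral_nonneg hf_nonneg)]
  clear_value c X
  rcases eq_or_lt_of_le hσ0 with hσ | hσ
  · -- σ = 0 case
    have hσ' : σ = 0 := hσ.symm
    have hcsq : c^2 = 0 := by rw [hσ'] at hcheb; nlinarith [hcheb, sq_nonneg c]
    have hc0 : c = 0 := pow_eq_zero_iff (two_ne_zero) |>.mp hcsq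
    have hXae : (fun ω => X ω ^ 2) =ᵐ[ℙ] 0 := by
      rw [← integral_eq_zero_iff_of_nonneg (fun ω => sq_nonneg (X ω)) hXsq, hEX2, hσ']
      ring
    have hfae : (fun ω => (c - X ω) * Set.indicator {ω | X ω < c} (fun _ => (1:ℝ)) ω)
        =ᵐ[ℙ] 0 := by
      filter_upwards [hXae] with ω hω
      have : X ω = 0 := by
        have : X ω ^ 2 = 0 := hω
        exact pow_eq_zero_iff (by norm_num) |>.mp this
      simp [this, hc0]
    rw [integral_congr_ae hfae]
    simp [hσ']
  · -- σ > 0 case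
    set s := Real.sqrt (2*ε) with hsdef
    have hs0 : 0 < s := Real.sqrt_pos.mpr hε2
    have hs2 : s^2 = 2*ε := Real.sq_sqrt hε2.le
    set t := s / σ with htdef
    have ht : 0 < t := div_pos hs0 hσ
    have hinv : t * (1/t) = 1 := by field_simp
    have habsc : |c| * (2*ε) ≤ σ * s := by
      have hch' : (|c| * s)^2 ≤ σ^2 := by rw [mul_pow, sq_abs, hs2]; exact hcheb
      have h0 : (0:ℝ) ≤ |c| * s := by positivity
      have h1 : |c| * s ≤ σ := by
        rw [← Real.sqrt_sq h0, ← Real.sqrt_sq hσ0]; exact Real.sqrt_le_sqrt hch'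
      have h2 := mul_le_mul_of_nonneg_right h1 hs0.le
      calc |c| * (2 * ε) = |c| * s * s := by rw [← hs2]; ring
        _ ≤ σ * s := h2
    have habs : ∀ x : ℝ, |x| ≤ (t * x^2 + 1/t)/2 := fun x => aux_amgm t x ht
    have hg1 : Integrable (fun ω => |c| * Set.indicator {ω | X ω < c} (fun _ => (1:ℝ)) ω) ℙ := by
      exact hind.const_mul _
    have hg3 : Integrable (fun ω => t * X ω^2) ℙ := by exact hXsq.const_mul t
    have hg4 : Integrable (fun ω => (1/t) * Set.indicator {ω | X ω < c} (fun _ => (1:ℝ)) ω) ℙ := by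
      exact hind.const_mul _
    have hg2 : Integrable (fun ω =>
        (t * X ω^2 + (1/t) * Set.indicator {ω | X ω < c} (fun _ => (1:ℝ)) ω)/2) ℙ := by
      exact (hg3.add hg4).div_const 2
    have hg_int : Integrable (fun ω => |c| * Set.indicator {ω | X ω < c} (fun _ => (1:ℝ)) ω
        + (t * X ω^2 + (1/t) * Set.indicator {ω | X ω < c} (fun _ => (1:ℝ)) ω)/2) ℙ := by
      exact hg1.add hg2
    have hfg : ∀ ω, (c - X ω) * Set.indicator {ω | X ω < c} (fun _ => (1:ℝ)) ω
        ≤ |c| * Set.indicator {ω | X ω < c} (fun _ => (1:ℝ)) ω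
          + (t * X ω^2 + (1/t) * Set.indicator {ω | X ω < c} (fun _ => (1:ℝ)) ω)/2 := by
      intro ω
      by_cases h : X ω < c
      · rw [Set.indicator_of_mem (show ω ∈ {ω | X ω < c} from h)]
        have h1 : c - X ω ≤ |c| + |X ω| := by
          have := le_abs_self c; have := neg_le_abs (X ω); linarith
        have h2 := habs (X ω)
        simp only [mul_one]
        linarith
      · rw [Set.indicator_of_notMem (show ω ∉ {ω | X ω < c} from h)]
        have := sq_nonneg (X ω)
        simp only [mul_zero, zero_add, sub_zero]
        positivity
    calc ∫ ω, (c - X ω) * Set.indicator {ω | X ω < c} (fun _ => (1:ℝ)) ω ∂ℙ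
        ≤ ∫ ω, (|c| * Set.indicator {ω | X ω < c} (fun _ => (1:ℝ)) ω
          + (t * X ω^2 + (1/t) * Set.indicator {ω | X ω < c} (fun _ => (1:ℝ)) ω)/2) ∂ℙ :=
          integral_mono_of_nonneg (ae_of_all _ hf_nonneg) hg_int (ae_of_all _ hfg)
      _ = |c| * (2*ε) + (t * σ^2 + (1/t) * (2*ε))/2 := by
          rw [integral_add hg1 hg2, integral_div, integral_add hg3 hg4,
            integral_const_mul, integral_const_mul, integral_const_mul, hEX2, hind_int]
      _ ≤ σ * Real.sqrt (8*ε) := by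
          have hts : t * σ^2 = s * σ := by field_simp [htdef]; rw [htdef]; field_simp
          have hts' : (1/t) * (2*ε) = σ * s := by
            rw [← hs2]; field_simp [htdef]; rw [htdef]; field_simp
          have h8 : Real.sqrt (8*ε) = 2 * s := by
            rw [show (8:ℝ)*ε = 4*(2*ε) by ring, Real.sqrt_mul (by norm_num) (2*ε),
              show (4:ℝ) = 2^2 by norm_num, Real.sqrt_sq (by norm_num)]
          rw [h8, hts, hts']
          linarith [habsc]
  done
end

section
/- Let S be a real random variable with mean S*, standard deviation σ, and let 0 < ε < 1/4. Define trimming thresholds α, β with Q_{ε/2}(S̄) ≤ α − S* ≤ Q_{2ε}(S̄) and Q_{1−2ε}(S̄) ≤ β − S* ≤ Q_{1−ε/2}(S̄), where S̄ = S − S*. Let φ_{α,β}(s) = β if s > β, s if α ≤ s ≤ β, α if s < α. Then |E[φ_{α,β}(S)] − S*| ≤ σ√(8ε). -/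
open MeasureTheory ProbabilityTheory

/-- Cauchy–Schwarz: `∫_A |X| ≤ √(∫ X²) √(ℙ A)`. -/
lemma aux_CS_trim {Ω : Type*} [MeasureSpace Ω] [IsProbabilityMeasure (ℙ : Measure Ω)]
    (X : Ω → ℝ) (hX2 : MemLp X 2 ℙ) {A : Set Ω} (hA : MeasurableSet A) :
    ∫ ω, A.indicator (fun ω => |X ω|) ω ∂ℙ ≤
      Real.sqrt (∫ ω, (X ω)^2 ∂ℙ) * Real.sqrt ((ℙ A).toReal) := by
  have h2 : (2:ℝ).HolderConjugate 2 := Real.holderConjugate_iff.mpr ⟨by norm_num, by norm_num⟩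
  have h2e : ENNReal.ofReal (2:ℝ) = 2 := by
    rw [ENNReal.ofReal_ofNat]
  have hXa : MemLp (fun ω => |X ω|) (ENNReal.ofReal (2:ℝ)) ℙ := by
    rw [h2e]; exact hX2.abs
  have hInd : MemLp (A.indicator (fun _ => (1:ℝ))) (ENNReal.ofReal (2:ℝ)) ℙ := by
    rw [h2e]; exact (memLp_const 1).indicator hA
  have key := integral_mul_le_Lp_mul_Lq_of_nonneg h2
    (ae_of_all _ fun ω => abs_nonneg (X ω))
    (ae_of_all _ fun ω => Set.indicator_nonneg (fun _ _ => zero_le_one) ω)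
    hXa hInd
  have e1 : ∫ ω, A.indicator (fun ω => |X ω|) ω ∂ℙ
      = ∫ ω, |X ω| * A.indicator (fun _ => (1:ℝ)) ω ∂ℙ := by
    refine integral_congr_ae (ae_of_all _ fun ω => ?_)
    by_cases h : ω ∈ A <;> simp [h]
  have e2 : ∫ ω, |X ω| ^ (2:ℝ) ∂ℙ = ∫ ω, (X ω)^2 ∂ℙ := by
    refine integral_congr_ae (ae_of_all _ fun ω => ?_)
    simp only [Real.rpow_two, sq_abs]
  have e3 : ∫ ω, (A.indicator (fun _ => (1:ℝ)) ω) ^ (2:ℝ) ∂ℙ = (ℙ A).toReal := by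
    have : ∫ ω, (A.indicator (fun _ => (1:ℝ)) ω) ^ (2:ℝ) ∂ℙ
        = ∫ ω, A.indicator (fun _ => (1:ℝ)) ω ∂ℙ := by
      refine integral_congr_ae (ae_of_all _ fun ω => ?_)
      simp only [Real.rpow_two]
      by_cases h : ω ∈ A <;> simp [h]
    rw [this, integral_indicator_const (1:ℝ) hA, smul_eq_mul, mul_one, measureReal_def]
  rw [e1]
  calc ∫ ω, |X ω| * A.indicator (fun _ => (1:ℝ)) ω ∂ℙ
      ≤ (∫ ω, |X ω| ^ (2:ℝ) ∂ℙ) ^ (1/(2:ℝ)) *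
        (∫ ω, (A.indicator (fun _ => (1:ℝ)) ω) ^ (2:ℝ) ∂ℙ) ^ (1/(2:ℝ)) := key
    _ = Real.sqrt (∫ ω, (X ω)^2 ∂ℙ) * Real.sqrt ((ℙ A).toReal) := by
        rw [e2, e3, Real.sqrt_eq_rpow, Real.sqrt_eq_rpow]

/-- Core tail bound. -/
lemma aux_tail_trim {Ω : Type*} [MeasureSpace Ω] [IsProbabilityMeasure (ℙ : Measure Ω)]
    (X : Ω → ℝ) (hXm : Measurable X) (hX2 : MemLp X 2 ℙ) (σ t ε : ℝ)
    (hσ : 0 ≤ σ) (hε0 : 0 < ε) (hε : ε < 1/4)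
    (hvar : ∫ ω, (X ω)^2 ∂ℙ ≤ σ^2)
    (hp : (ℙ {ω | t < X ω}).toReal ≤ 2*ε)
    (ht : -t ≤ σ * Real.sqrt 2) :
    ∫ ω, max (X ω - t) 0 ∂ℙ ≤ σ * Real.sqrt (8*ε) := by
  set A : Set Ω := {ω | t < X ω} with hAdef
  have hA : MeasurableSet A := measurableSet_lt measurable_const hXm
  have hXint : Integrable X ℙ := hX2.integrable one_le_two
  have hPA : (ℙ A).toReal ≤ 2*ε := hp
  have hPA0 : 0 ≤ (ℙ A).toReal := ENNReal.toReal_nonneg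
  -- pointwise bound
  have hpt : ∀ ω, max (X ω - t) 0 ≤
      A.indicator (fun ω => |X ω| + max (-t) 0) ω := by
    intro ω
    simp only [Set.indicator_apply]
    by_cases h : ω ∈ A
    · rw [if_pos h]
      have h1 : X ω - t ≤ |X ω| + max (-t) 0 :=
        add_le_add (le_abs_self _) (le_max_left _ _)
      have h2 : (0:ℝ) ≤ |X ω| + max (-t) 0 :=
        add_nonneg (abs_nonneg _) (le_max_right _ _)
      exact max_le h1 h2
    · rw [if_neg h]
      have h' : ¬ t < X ω := h
      push_neg at h'
      exact max_le (by linarith) le_rfl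
  have hIub : Integrable (A.indicator (fun ω => |X ω| + max (-t) 0)) ℙ :=
    (hXint.abs.add (integrable_const _)).indicator hA
  have hIlhs : Integrable (fun ω => max (X ω - t) 0) ℙ :=
    (hXint.sub (integrable_const t)).pos_part
  have step1 : ∫ ω, max (X ω - t) 0 ∂ℙ ≤
      ∫ ω, A.indicator (fun ω => |X ω| + max (-t) 0) ω ∂ℙ :=
    integral_mono hIlhs hIub hpt
  have step2 : ∫ ω, A.indicator (fun ω => |X ω| + max (-t) 0) ω ∂ℙ =
      (∫ ω, A.indicator (fun ω => |X ω|) ω ∂ℙ) + max (-t) 0 * (ℙ A).toReal := by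
    have : (A.indicator (fun ω => |X ω| + max (-t) 0)) =
        fun ω => A.indicator (fun ω => |X ω|) ω
          + A.indicator (fun _ => max (-t) 0) ω := by
      funext ω; by_cases h : ω ∈ A <;> simp [h]
    rw [this, integral_add (hXint.abs.indicator hA) ((integrable_const _).indicator hA),
      integral_indicator_const _ hA, smul_eq_mul, mul_comm, measureReal_def]
  have step3 : ∫ ω, A.indicator (fun ω => |X ω|) ω ∂ℙ ≤ σ * Real.sqrt (2*ε) := by
    calc ∫ ω, A.indicator (fun ω => |X ω|) ω ∂ℙ
        ≤ Real.sqrt (∫ ω, (X ω)^2 ∂ℙ) * Real.sqrt ((ℙ A).toReal) :=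
          aux_CS_trim X hX2 hA
      _ ≤ Real.sqrt (σ^2) * Real.sqrt (2*ε) :=
          mul_le_mul (Real.sqrt_le_sqrt hvar) (Real.sqrt_le_sqrt hPA)
            (Real.sqrt_nonneg _) (Real.sqrt_nonneg _)
      _ = σ * Real.sqrt (2*ε) := by rw [Real.sqrt_sq hσ]
  have step4 : max (-t) 0 * (ℙ A).toReal ≤ (σ * Real.sqrt 2) * (2*ε) := by
    have h1 : max (-t) 0 ≤ σ * Real.sqrt 2 :=
      max_le ht (mul_nonneg hσ (Real.sqrt_nonneg 2))
    exact mul_le_mul h1 hPA hPA0 (mul_nonneg hσ (Real.sqrt_nonneg 2))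
  -- numeric
  have hs2 : Real.sqrt 2 ^ 2 = 2 := Real.sq_sqrt (by norm_num)
  have hs2e : Real.sqrt (2*ε) ^ 2 = 2*ε := Real.sq_sqrt (by linarith)
  have hs2n : (0:ℝ) ≤ Real.sqrt 2 := Real.sqrt_nonneg 2
  have hs2en : (0:ℝ) ≤ Real.sqrt (2*ε) := Real.sqrt_nonneg _
  have h8 : Real.sqrt (8*ε) = 2 * Real.sqrt (2*ε) := by
    rw [show (8:ℝ)*ε = 4*(2*ε) by ring, Real.sqrt_mul (by norm_num),
      show (4:ℝ) = 2^2 by norm_num, Real.sqrt_sq (by norm_num)]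
  have hab : Real.sqrt 2 * Real.sqrt (2*ε) ≤ 1 := by
    nlinarith [sq_nonneg (Real.sqrt 2 * Real.sqrt (2*ε) - 1), mul_nonneg hs2n hs2en]
  have hkey : Real.sqrt 2 * (2*ε) ≤ Real.sqrt (2*ε) := by
    nlinarith [mul_le_mul_of_nonneg_right hab hs2en, hs2e, hs2n, hs2en]
  calc ∫ ω, max (X ω - t) 0 ∂ℙ
      ≤ (∫ ω, A.indicator (fun ω => |X ω|) ω ∂ℙ) + max (-t) 0 * (ℙ A).toReal := by
        rw [← step2]; exact step1
    _ ≤ σ * Real.sqrt (2*ε) + (σ * Real.sqrt 2) * (2*ε) := add_le_add step3 step4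
    _ ≤ σ * Real.sqrt (8*ε) := by
        rw [h8]
        have := mul_le_mul_of_nonneg_left hkey hσ
        nlinarith

/-- The expected trimmed value deviates from the true mean by at most σ√(8ε). -/
theorem trimmed_mean_bias_bound {Ω : Type*} [MeasureSpace Ω]
    [IsProbabilityMeasure (ℙ : Measure Ω)]
    (S : Ω → ℝ) (hS : Measurable S) (hS2 : MemLp S 2 ℙ)
    (Sstar σ ε α β : ℝ) (hσ0 : 0 ≤ σ) (hε0 : 0 < ε) (hε : ε < 1/4) (hαβ : α ≤ β)
    (hmean : ∫ ω, S ω ∂ℙ = Sstar)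
    (hvar : variance S ℙ = σ^2)
    (Q : ℝ → ℝ)
    (hQdef : ∀ q, 0 < q → q < 1 →
      Q q = sSup {M : ℝ | (1 - q) ≤ (ℙ {ω | S ω - Sstar ≥ M}).toReal})
    (hQprob : ∀ q, 0 < q → q < 1 →
      (ℙ {ω | S ω - Sstar ≥ Q q}).toReal = 1 - q)
    (hα : Q (ε/2) ≤ α - Sstar ∧ α - Sstar ≤ Q (2*ε))
    (hβ : Q (1 - 2*ε) ≤ β - Sstar ∧ β - Sstar ≤ Q (1 - ε/2))
    (φ : ℝ → ℝ) (hφ : ∀ s, φ s = if s > β then β else if s < α then α else s) :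
    |(∫ ω, φ (S ω) ∂ℙ) - Sstar| ≤ σ * Real.sqrt (8*ε) := by
  set X : Ω → ℝ := fun ω => S ω - Sstar with hXdef
  have hXm : Measurable X := hS.sub measurable_const
  have hX2 : MemLp X 2 ℙ := hS2.sub (memLp_const Sstar)
  have hXint : Integrable X ℙ := hX2.integrable one_le_two
  have hSint : Integrable S ℙ := hS2.integrable one_le_two
  set tα : ℝ := α - Sstar with htαdef
  set tβ : ℝ := β - Sstar with htβdef
  have htt : tα ≤ tβ := by simp only [htαdef, htβdef]; linarith
  -- second moment of X
  have hXsq : ∫ ω, (X ω)^2 ∂ℙ = σ^2 := by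
    rw [← hvar, variance_eq_integral hS.aemeasurable]
    refine integral_congr_ae (ae_of_all _ fun ω => ?_)
    simp [hXdef, hmean]
  have hXsqle : ∫ ω, (X ω)^2 ∂ℙ ≤ σ^2 := le_of_eq hXsq
  -- quantile probabilities
  have hQ1 : (ℙ {ω | X ω ≥ Q (1 - 2*ε)}).toReal = 2*ε := by
    have := hQprob (1 - 2*ε) (by linarith) (by linarith)
    rw [this]; ring
  have hQ2 : (ℙ {ω | X ω ≥ Q (2*ε)}).toReal = 1 - 2*ε :=
    hQprob (2*ε) (by linarith) (by linarith)
  have hne : ∀ s : Set Ω, ℙ s ≠ ⊤ := fun s => measure_ne_top ℙ s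
  -- complement identity
  have hcompl : ∀ c : ℝ, (ℙ {ω | X ω < c}).toReal = 1 - (ℙ {ω | X ω ≥ c}).toReal := by
    intro c
    have hms : MeasurableSet {ω | X ω ≥ c} := measurableSet_le measurable_const hXm
    have h1 : ℙ {ω | X ω ≥ c} + ℙ {ω | X ω ≥ c}ᶜ = 1 := by
      rw [measure_add_measure_compl hms, measure_univ]
    have h2 : {ω | X ω ≥ c}ᶜ = {ω | X ω < c} := by
      ext ω; simp [not_le]
    rw [h2] at h1
    have := congrArg ENNReal.toReal h1
    rw [ENNReal.toReal_add (hne _) (hne _), ENNReal.toReal_one] at this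
    linarith
  -- tail probabilities at the thresholds
  have hpβ : (ℙ {ω | tβ < X ω}).toReal ≤ 2*ε := by
    rw [← hQ1]
    refine ENNReal.toReal_mono (hne _) (measure_mono fun ω h => ?_)
    simp only [Set.mem_setOf_eq] at *
    exact le_of_lt (lt_of_le_of_lt hβ.1 h)
  have hpα : (ℙ {ω | X ω < tα}).toReal ≤ 2*ε := by
    rw [hcompl]
    have hmono : (ℙ {ω | X ω ≥ Q (2*ε)}).toReal ≤ (ℙ {ω | X ω ≥ tα}).toReal := by
      refine ENNReal.toReal_mono (hne _) (measure_mono fun ω h => ?_)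
      simp only [Set.mem_setOf_eq] at *
      exact le_trans hα.2 h
    rw [hQ2] at hmono
    linarith
  -- Chebyshev bound
  have cheb : ∀ c : ℝ, 0 < c → (ℙ {ω | c ≤ |X ω|}).toReal ≤ σ^2 / c^2 := by
    intro c hc
    have h := meas_ge_le_variance_div_sq (μ := ℙ) hS2 hc
    rw [hvar, hmean] at h
    calc (ℙ {ω | c ≤ |X ω|}).toReal
        ≤ (ENNReal.ofReal (σ^2 / c^2)).toReal := ENNReal.toReal_mono (by simp) h
      _ ≤ σ^2 / c^2 := by
          rw [ENNReal.toReal_ofReal (by positivity)]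
  have hσ2 : (0:ℝ) ≤ σ * Real.sqrt 2 := mul_nonneg hσ0 (Real.sqrt_nonneg 2)
  have hs2 : Real.sqrt 2 ^ 2 = 2 := Real.sq_sqrt (by norm_num)
  have hsqrt2σ : Real.sqrt (2 * σ^2) = σ * Real.sqrt 2 := by
    rw [mul_comm, Real.sqrt_mul (sq_nonneg σ), Real.sqrt_sq hσ0]
  -- threshold size bounds
  have hbig : ∀ q : ℝ, 0 < q → (ℙ {ω | X ω ≥ q}).toReal = 1 - 2*ε → q ≤ σ * Real.sqrt 2 := by
    intro q hq hprob
    have hsub : {ω | X ω ≥ q} ⊆ {ω | q ≤ |X ω|} := by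
      intro ω h
      simp only [Set.mem_setOf_eq] at *
      exact le_trans h (le_abs_self _)
    have h1 : 1 - 2*ε ≤ σ^2 / q^2 := by
      refine le_trans ?_ (cheb q hq)
      rw [← hprob]
      exact ENNReal.toReal_mono (hne _) (measure_mono hsub)
    have hq2 : (1 - 2*ε) * q^2 ≤ σ^2 := (le_div_iff₀ (pow_pos hq 2)).mp h1
    have h2 : q ≤ Real.sqrt (2 * σ^2) := by
      rw [← Real.sqrt_sq hq.le]
      exact Real.sqrt_le_sqrt (by nlinarith)
    rwa [hsqrt2σ] at h2
  have htβbound : -tβ ≤ σ * Real.sqrt 2 := by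
    rcases le_or_gt 0 tβ with h | h
    · linarith
    · have hq := hβ.1
      rcases le_or_gt (Q (1 - 2*ε)) 0 with h0 | h0
      · -- q ≤ 0, q ≤ tβ < 0 : show -Q ≤ σ√2 hence -tβ ≤ σ√2; use lower deviation Chebyshev
        -- P(X < q) = 1 - 2ε with q ≤ tβ < 0
        by_cases hq0 : Q (1 - 2*ε) = 0
        · rw [hq0] at hq; linarith
        · have hqneg : Q (1 - 2*ε) < 0 := lt_of_le_of_ne h0 hq0
          have hprob : (ℙ {ω | X ω < Q (1 - 2*ε)}).toReal = 1 - 2*ε := by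
            rw [hcompl, hQ1]
          have hsub : {ω | X ω < Q (1 - 2*ε)} ⊆ {ω | -Q (1 - 2*ε) ≤ |X ω|} := by
            intro ω hω
            simp only [Set.mem_setOf_eq] at *
            calc -Q (1 - 2*ε) ≤ -X ω := by linarith
              _ ≤ |X ω| := neg_le_abs _
          have h1 : 1 - 2*ε ≤ σ^2 / (-Q (1 - 2*ε))^2 := by
            refine le_trans ?_ (cheb (-Q (1 - 2*ε)) (by linarith))
            exact le_trans (le_of_eq hprob.symm)
              (ENNReal.toReal_mono (hne _) (measure_mono hsub))
          have hpos : (0:ℝ) < (-Q (1 - 2*ε))^2 := pow_pos (by linarith) 2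
          have hq2 : (1 - 2*ε) * (-Q (1 - 2*ε))^2 ≤ σ^2 := (le_div_iff₀ hpos).mp h1
          have h2 : -Q (1 - 2*ε) ≤ Real.sqrt (2 * σ^2) := by
            rw [← Real.sqrt_sq (by linarith : (0:ℝ) ≤ -Q (1 - 2*ε))]
            exact Real.sqrt_le_sqrt (by nlinarith)
          rw [hsqrt2σ] at h2
          linarith
      · linarith
  have htαbound : tα ≤ σ * Real.sqrt 2 := by
    rcases le_or_gt (Q (2*ε)) 0 with h0 | h0
    · linarith [hα.2]
    · linarith [hα.2, hbig (Q (2*ε)) h0 hQ2]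
  -- apply the tail lemma to both sides
  have hB : ∫ ω, max (X ω - tβ) 0 ∂ℙ ≤ σ * Real.sqrt (8*ε) :=
    aux_tail_trim X hXm hX2 σ tβ ε hσ0 hε0 hε hXsqle hpβ htβbound
  have hA : ∫ ω, max (tα - X ω) 0 ∂ℙ ≤ σ * Real.sqrt (8*ε) := by
    have := aux_tail_trim (fun ω => -X ω) hXm.neg hX2.neg σ (-tα) ε hσ0 hε0 hε
      (by simpa using hXsqle)
      (by
        have hset : {ω | -tα < -X ω} = {ω | X ω < tα} := by
          ext ω; simp [neg_lt_neg_iff]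
        rw [hset]; exact hpα)
      (by simpa using htαbound)
    calc ∫ ω, max (tα - X ω) 0 ∂ℙ = ∫ ω, max (-X ω - (-tα)) 0 ∂ℙ := by
          refine integral_congr_ae (ae_of_all _ fun ω => ?_); ring_nf
      _ ≤ σ * Real.sqrt (8*ε) := this
  -- integrability of the pieces
  have hAint : Integrable (fun ω => max (tα - X ω) 0) ℙ :=
    ((integrable_const tα).sub hXint).pos_part
  have hBint : Integrable (fun ω => max (X ω - tβ) 0) ℙ :=
    (hXint.sub (integrable_const tβ)).pos_part
  -- pointwise decomposition
  have hdecomp : ∀ ω, φ (S ω) - S ω = max (tα - X ω) 0 - max (X ω - tβ) 0 := by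
    intro ω
    rw [hφ]
    rcases lt_trichotomy (S ω) α with h | h | h
    · have h1 : ¬ (S ω > β) := by linarith
      have h2 : S ω < α := h
      rw [if_neg h1, if_pos h2]
      have e1 : max (tα - X ω) 0 = tα - X ω := by
        apply max_eq_left; simp only [hXdef, htαdef]; linarith
      have e2 : max (X ω - tβ) 0 = 0 := by
        apply max_eq_right; simp only [hXdef, htβdef]; linarith
      rw [e1, e2]; simp only [hXdef, htαdef]; ring
    · have h1 : ¬ (S ω > β) := by linarith
      have h2 : ¬ (S ω < α) := by linarith
      rw [if_neg h1, if_neg h2]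
      have e1 : max (tα - X ω) 0 = 0 := by
        apply max_eq_right; simp only [hXdef, htαdef]; linarith
      have e2 : max (X ω - tβ) 0 = 0 := by
        apply max_eq_right; simp only [hXdef, htβdef]; linarith
      rw [e1, e2]; ring
    · rcases le_or_gt (S ω) β with hb | hb
      · have h1 : ¬ (S ω > β) := by linarith
        have h2 : ¬ (S ω < α) := by linarith
        rw [if_neg h1, if_neg h2]
        have e1 : max (tα - X ω) 0 = 0 := by
          apply max_eq_right; simp only [hXdef, htαdef]; linarith
        have e2 : max (X ω - tβ) 0 = 0 := by
          apply max_eq_right; simp only [hXdef, htβdef]; linarith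
        rw [e1, e2]; ring
      · rw [if_pos hb]
        have e1 : max (tα - X ω) 0 = 0 := by
          apply max_eq_right; simp only [hXdef, htαdef]; linarith
        have e2 : max (X ω - tβ) 0 = X ω - tβ := by
          apply max_eq_left; simp only [hXdef, htβdef]; linarith
        rw [e1, e2]; simp only [hXdef, htβdef]; ring
  -- φ ∘ S is integrable
  have hdeq : (fun ω => φ (S ω) - S ω) =
      fun ω => max (tα - X ω) 0 - max (X ω - tβ) 0 := funext hdecomp
  have hdint : Integrable (fun ω => φ (S ω) - S ω) ℙ := by
    rw [hdeq]; exact hAint.sub hBint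
  have hφint : Integrable (fun ω => φ (S ω)) ℙ := by
    have h := hdint.add hSint
    refine h.congr (ae_of_all _ fun ω => ?_)
    show φ (S ω) - S ω + S ω = φ (S ω)
    ring
  -- compute the integral difference
  have h0 : ∫ ω, (φ (S ω) - S ω) ∂ℙ =
      (∫ ω, max (tα - X ω) 0 ∂ℙ) - ∫ ω, max (X ω - tβ) 0 ∂ℙ := by
    rw [hdeq, integral_sub hAint hBint]
  have h1 : ∫ ω, (φ (S ω) - S ω) ∂ℙ = (∫ ω, φ (S ω) ∂ℙ) - Sstar := by
    rw [integral_sub hφint hSint, hmean]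
  have hIdiff : (∫ ω, φ (S ω) ∂ℙ) - Sstar =
      (∫ ω, max (tα - X ω) 0 ∂ℙ) - ∫ ω, max (X ω - tβ) 0 ∂ℙ := by
    rw [← h1, h0]
  have hA0 : 0 ≤ ∫ ω, max (tα - X ω) 0 ∂ℙ :=
    integral_nonneg fun ω => le_max_right _ _
  have hB0 : 0 ≤ ∫ ω, max (X ω - tβ) 0 ∂ℙ :=
    integral_nonneg fun ω => le_max_right _ _
  rw [hIdiff, abs_le]
  constructor <;> [skip; skip] <;> linarith
end

section
/- Under the assumptions of the previous statement (trimming thresholds α, β satisfying the quantile sandwich bounds, 0 < ε < 1/4), every point value of the trimmed variable satisfies |φ_{α,β}(s) − E[φ_{α,β}(S)]| ≤ σ/√(ε/2) + σ√(8ε) for all s ∈ ℝ. -/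
open MeasureTheory ProbabilityTheory

lemma cs_indicator_aux {Ω : Type*} [MeasureSpace Ω] [IsProbabilityMeasure (ℙ : Measure Ω)]
    (f : Ω → ℝ) (hf : MemLp f 2 ℙ) (σ p : ℝ) (hσ : 0 ≤ σ) (hp : 0 < p)
    (hsq : ∫ ω, (f ω)^2 ∂ℙ ≤ σ^2) (A : Set Ω) (hA : MeasurableSet A)
    (hPA : (ℙ A).toReal ≤ p) :
    ∫ ω, A.indicator f ω ∂ℙ ≤ σ * Real.sqrt p := by
  have hint1 : Integrable (A.indicator f) ℙ := (hf.integrable one_le_two).indicator hA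
  have key : ∀ t : ℝ, 0 < t → ∫ ω, A.indicator f ω ∂ℙ ≤ σ^2/(2*t) + (t/2)*p := by
    intro t ht
    have hi2 : Integrable (fun ω => (f ω)^2/(2*t)) ℙ := hf.integrable_sq.div_const _
    have hi3 : Integrable (A.indicator (fun _ => t/2)) ℙ := (integrable_const (t/2)).indicator hA
    have hpt : ∀ ω, A.indicator f ω ≤ (f ω)^2/(2*t) + A.indicator (fun _ => t/2) ω := by
      intro ω
      by_cases hx : ω ∈ A
      · simp only [Set.indicator_of_mem hx]
        rw [div_add' _ _ _ (by positivity), le_div_iff₀ (by positivity)]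
        nlinarith [sq_nonneg (f ω - t)]
      · simp only [Set.indicator_of_notMem hx]
        positivity
    calc ∫ ω, A.indicator f ω ∂ℙ
        ≤ ∫ ω, ((f ω)^2/(2*t) + A.indicator (fun _ => t/2) ω) ∂ℙ :=
          integral_mono hint1 (hi2.add hi3) hpt
      _ = (∫ ω, (f ω)^2 ∂ℙ)/(2*t) + (ℙ A).toReal * (t/2) := by
          rw [integral_add hi2 hi3, integral_div, integral_indicator_const _ hA, smul_eq_mul]; rfl
      _ ≤ σ^2/(2*t) + (t/2)*p := by
          have h1 : (∫ ω, (f ω)^2 ∂ℙ)/(2*t) ≤ σ^2/(2*t) :=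
            div_le_div_of_nonneg_right hsq (by positivity) |>.trans_eq rfl
          have h2 : (ℙ A).toReal * (t/2) ≤ (t/2)*p := by
            rw [mul_comm]; exact mul_le_mul_of_nonneg_left hPA (by positivity)
          linarith
  rcases eq_or_lt_of_le hσ with hσ0 | hσpos
  · have h0 : ∫ ω, A.indicator f ω ∂ℙ ≤ 0 := by
      apply le_of_forall_pos_le_add
      intro δ hδ
      have hk := key (2*δ/p) (by positivity)
      have hσ2 : σ^2 = 0 := by rw [← hσ0]; ring
      rw [hσ2] at hk
      have hk' : ∫ ω, A.indicator f ω ∂ℙ ≤ (2*δ/p/2)*p := by simpa using hk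
      have heq : (2*δ/p/2)*p = δ := by field_simp
      linarith [hk'.trans_eq heq]
    have : σ * Real.sqrt p = 0 := by rw [← hσ0]; ring
    linarith
  · set r := Real.sqrt p with hrdef
    have hr0 : 0 < r := Real.sqrt_pos.mpr hp
    have hr2 : r^2 = p := Real.sq_sqrt hp.le
    have hk := key (σ/r) (by positivity)
    have heq : σ^2/(2*(σ/r)) + ((σ/r)/2)*p = σ * r := by
      field_simp
      nlinarith [hr2]
    linarith [hk.trans_eq heq]

set_option maxHeartbeats 1000000 in
/-- Pointwise bound on the trimmed variable around its expectation:
|φ_{α,β}(s) − E[φ_{α,β}(S)]| ≤ σ/√(ε/2) + σ√(8ε). -/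
theorem trimmed_value_pointwise_bound {Ω : Type*} [MeasureSpace Ω]
    [IsProbabilityMeasure (ℙ : Measure Ω)]
    (S : Ω → ℝ) (hS : Measurable S) (hS2 : MemLp S 2 ℙ)
    (Sstar σ ε α β : ℝ) (hσ0 : 0 ≤ σ) (hε0 : 0 < ε) (hε : ε < 1/4) (hαβ : α ≤ β)
    (hmean : ∫ ω, S ω ∂ℙ = Sstar)
    (hvar : variance S ℙ = σ^2)
    (Q : ℝ → ℝ)
    (hQdef : ∀ q, 0 < q → q < 1 →
      Q q = sSup {M : ℝ | (1 - q) ≤ (ℙ {ω | S ω - Sstar ≥ M}).toReal})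
    (hQprob : ∀ q, 0 < q → q < 1 →
      (ℙ {ω | S ω - Sstar ≥ Q q}).toReal = 1 - q)
    (hα : Q (ε/2) ≤ α - Sstar ∧ α - Sstar ≤ Q (2*ε))
    (hβ : Q (1 - 2*ε) ≤ β - Sstar ∧ β - Sstar ≤ Q (1 - ε/2))
    (φ : ℝ → ℝ) (hφ : ∀ s, φ s = if s > β then β else if s < α then α else s) :
    ∀ s : ℝ, |φ s - ∫ ω, φ (S ω) ∂ℙ| ≤
      σ / Real.sqrt (ε/2) + σ * Real.sqrt (8*ε) := by
  intro s
  -- basic real facts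
  set rε := Real.sqrt (ε/2) with hrεdef
  have hrε0 : 0 < rε := Real.sqrt_pos.mpr (by linarith)
  have hrε2 : rε^2 = ε/2 := Real.sq_sqrt (by linarith)
  set r2 := Real.sqrt (2*ε) with hr2def
  have hr20 : 0 < r2 := Real.sqrt_pos.mpr (by linarith)
  have hr22 : r2^2 = 2*ε := Real.sq_sqrt (by linarith)
  have h8 : Real.sqrt (8*ε) = 2*r2 := by
    rw [hr2def, show (8:ℝ)*ε = 2^2*(2*ε) by ring, Real.sqrt_mul (by positivity),
      Real.sqrt_sq (by norm_num)]
  -- integrability and variance facts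
  have intS : Integrable S ℙ := hS2.integrable one_le_two
  have hSb2 : MemLp (fun ω => S ω - Sstar) 2 ℙ := hS2.sub (memLp_const Sstar)
  have intSb : Integrable (fun ω => S ω - Sstar) ℙ := intS.sub (integrable_const _)
  have hsqeq : ∫ ω, (S ω - Sstar)^2 ∂ℙ = σ^2 := by
    rw [← hvar, variance_eq_integral hS.aemeasurable]
    congr 1
    ext ω
    simp [hmean]
  -- Chebyshev
  have cheb : ∀ c : ℝ, 0 < c → (ℙ {ω | c ≤ |S ω - Sstar|}).toReal ≤ σ^2/c^2 := by
    intro c hc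
    have h := meas_ge_le_variance_div_sq (μ := ℙ) hS2 hc
    rw [hvar] at h
    have h2 : (ℙ {ω | c ≤ |S ω - ∫ x, S x ∂ℙ|}).toReal ≤ (ENNReal.ofReal (σ^2/c^2)).toReal :=
      ENNReal.toReal_mono ENNReal.ofReal_ne_top h
    rw [ENNReal.toReal_ofReal (by positivity), hmean] at h2
    exact h2
  have hmeasQ : ∀ c : ℝ, MeasurableSet {ω | S ω - Sstar ≥ c} :=
    fun c => measurableSet_le measurable_const (hS.sub measurable_const)
  have hcompl : ∀ q : ℝ, 0 < q → q < 1 →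
      (ℙ {ω | S ω - Sstar ≥ Q q}ᶜ).toReal = q := by
    intro q h1 h2
    rw [prob_compl_eq_one_sub (hmeasQ (Q q)),
      ENNReal.toReal_sub_of_le prob_le_one ENNReal.one_ne_top, ENNReal.toReal_one,
      hQprob q h1 h2]
    ring
  -- quantile bounds
  have bound1 : Q (1 - ε/2) ≤ σ / rε := by
    rcases le_or_gt (Q (1 - ε/2)) 0 with h | h
    · exact h.trans (by positivity)
    · have hP : (ℙ {ω | S ω - Sstar ≥ Q (1 - ε/2)}).toReal = ε/2 := by
        rw [hQprob _ (by linarith) (by linarith)]; ring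
      have hsub : {ω | S ω - Sstar ≥ Q (1 - ε/2)} ⊆ {ω | Q (1 - ε/2) ≤ |S ω - Sstar|} := by
        intro ω hω
        simp only [Set.mem_setOf_eq] at hω ⊢
        exact le_trans hω (le_abs_self _)
      have hle := (ENNReal.toReal_mono (measure_ne_top ℙ _) (measure_mono hsub))
      rw [hP] at hle
      have hle2 := hle.trans (cheb _ h)
      have hq2 : ε/2 * (Q (1 - ε/2))^2 ≤ σ^2 := by
        rw [le_div_iff₀ (by positivity)] at hle2; linarith
      rw [le_div_iff₀ hrε0]
      nlinarith [mul_pos h hrε0]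
  have bound2 : -(Q (ε/2)) ≤ σ / rε := by
    rcases le_or_gt 0 (Q (ε/2)) with h | h
    · have : -(Q (ε/2)) ≤ 0 := by linarith
      exact this.trans (by positivity)
    · have hP := hcompl (ε/2) (by linarith) (by linarith)
      have hsub : {ω | S ω - Sstar ≥ Q (ε/2)}ᶜ ⊆ {ω | -(Q (ε/2)) ≤ |S ω - Sstar|} := by
        intro ω hω
        simp only [Set.mem_compl_iff, Set.mem_setOf_eq, not_le] at hω ⊢
        rw [abs_sub_comm, abs_of_pos (by linarith)]
        linarith
      have hle := (ENNReal.toReal_mono (measure_ne_top ℙ _) (measure_mono hsub))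
      rw [hP] at hle
      have hle2 := hle.trans (cheb _ (by linarith))
      have hq2 : ε/2 * (Q (ε/2))^2 ≤ σ^2 := by
        rw [le_div_iff₀ (by nlinarith)] at hle2; nlinarith
      rw [le_div_iff₀ hrε0]
      nlinarith [mul_pos (neg_pos.mpr h) hrε0]
  have bound3 : max 0 (-(Q (1 - 2*ε))) * (2*ε) ≤ σ * r2 := by
    rcases le_or_gt 0 (Q (1 - 2*ε)) with h | h
    · rw [max_eq_left (by linarith)]
      nlinarith [mul_nonneg hσ0 hr20.le]
    · rw [max_eq_right (by linarith)]
      have hP := hcompl (1 - 2*ε) (by linarith) (by linarith)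
      have hsub : {ω | S ω - Sstar ≥ Q (1 - 2*ε)}ᶜ ⊆ {ω | -(Q (1 - 2*ε)) ≤ |S ω - Sstar|} := by
        intro ω hω
        simp only [Set.mem_compl_iff, Set.mem_setOf_eq, not_le] at hω ⊢
        rw [abs_sub_comm, abs_of_pos (by linarith)]
        linarith
      have hle := (ENNReal.toReal_mono (measure_ne_top ℙ _) (measure_mono hsub))
      rw [hP] at hle
      have hle2 := hle.trans (cheb _ (by linarith))
      have hq2 : (1 - 2*ε) * (Q (1 - 2*ε))^2 ≤ σ^2 := by
        rw [le_div_iff₀ (by nlinarith)] at hle2; nlinarith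
      have hq3 : (Q (1 - 2*ε))^2 ≤ 2*σ^2 := by nlinarith [sq_nonneg (Q (1 - 2*ε))]
      have haux : (-(Q (1 - 2*ε))) * r2 ≤ σ := by
        nlinarith [mul_pos (neg_pos.mpr h) hr20, sq_nonneg ((-(Q (1 - 2*ε)))*r2 - σ)]
      nlinarith [mul_le_mul_of_nonneg_right haux hr20.le]
  have bound4 : max 0 (Q (2*ε)) * (2*ε) ≤ σ * r2 := by
    rcases le_or_gt (Q (2*ε)) 0 with h | h
    · rw [max_eq_left h]
      nlinarith [mul_nonneg hσ0 hr20.le]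
    · rw [max_eq_right h.le]
      have hP : (ℙ {ω | S ω - Sstar ≥ Q (2*ε)}).toReal = 1 - 2*ε := by
        rw [hQprob _ (by linarith) (by linarith)]
      have hsub : {ω | S ω - Sstar ≥ Q (2*ε)} ⊆ {ω | Q (2*ε) ≤ |S ω - Sstar|} := by
        intro ω hω
        simp only [Set.mem_setOf_eq] at hω ⊢
        exact le_trans hω (le_abs_self _)
      have hle := (ENNReal.toReal_mono (measure_ne_top ℙ _) (measure_mono hsub))
      rw [hP] at hle
      have hle2 := hle.trans (cheb _ h)
      have hq2 : (1 - 2*ε) * (Q (2*ε))^2 ≤ σ^2 := by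
        rw [le_div_iff₀ (by positivity)] at hle2; nlinarith
      have hq3 : (Q (2*ε))^2 ≤ 2*σ^2 := by nlinarith [sq_nonneg (Q (2*ε))]
      have haux : (Q (2*ε)) * r2 ≤ σ := by
        nlinarith [mul_pos h hr20, sq_nonneg ((Q (2*ε))*r2 - σ)]
      nlinarith [mul_le_mul_of_nonneg_right haux hr20.le]
  -- structure of φ
  have hψ : ∀ x, φ x = min β (max α x) := by
    intro x
    rw [hφ]
    split_ifs with h1 h2
    · rw [min_eq_left (le_trans h1.le (le_max_right α x))]
    · rw [max_eq_left h2.le, min_eq_right hαβ]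
    · push_neg at h1 h2
      rw [max_eq_right h2, min_eq_right h1]
  have hφle : ∀ x, φ x ≤ β := fun x => by rw [hψ]; exact min_le_left _ _
  have hφge : ∀ x, α ≤ φ x := fun x => by
    rw [hψ]; exact le_min hαβ (le_max_left _ _)
  -- integrability of φ ∘ S
  have hmeasφS : Measurable fun ω => φ (S ω) := by
    simp only [hψ]
    exact measurable_const.min (measurable_const.max hS)
  have intφ : Integrable (fun ω => φ (S ω)) ℙ := by
    apply Integrable.mono' (integrable_const (max |α| |β|)) hmeasφS.aestronglyMeasurable
    filter_upwards with ω
    rw [Real.norm_eq_abs, abs_le]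
    constructor
    · have := hφge (S ω)
      have := neg_abs_le α
      have := le_max_left |α| |β|
      linarith
    · have := hφle (S ω)
      have := le_abs_self β
      have := le_max_right |α| |β|
      linarith
  -- upper estimate of ∫ (S - φ S)
  set Qb := Q (1 - 2*ε) with hQbdef
  set A := {ω | S ω > β} with hAdef
  have hAmeas : MeasurableSet A := measurableSet_lt measurable_const hS
  have hPA : (ℙ A).toReal ≤ 2*ε := by
    have hsub : A ⊆ {ω | S ω - Sstar ≥ Qb} := by
      intro ω hω
      simp only [hAdef, Set.mem_setOf_eq] at hω ⊢
      have := hβ.1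
      linarith
    have hle := (ENNReal.toReal_mono (measure_ne_top ℙ _) (measure_mono hsub))
    rw [hQprob _ (by linarith) (by linarith)] at hle
    linarith
  have hup : ∫ ω, (S ω - φ (S ω)) ∂ℙ ≤ σ * r2 + max 0 (-Qb) * (2*ε) := by
    have ind1 : Integrable (A.indicator (fun ω => S ω - Sstar)) ℙ := intSb.indicator hAmeas
    have ind2 : Integrable (A.indicator (fun _ => -Qb)) ℙ := (integrable_const _).indicator hAmeas
    have hptw : ∀ ω, S ω - φ (S ω) ≤
        A.indicator (fun ω => S ω - Sstar) ω + A.indicator (fun _ => -Qb) ω := by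
      intro ω
      by_cases hω : ω ∈ A
      · have hβS : β < S ω := hω
        rw [Set.indicator_of_mem hω, Set.indicator_of_mem hω, hφ, if_pos hβS]
        have := hβ.1
        linarith
      · have hSβ : S ω ≤ β := not_lt.mp hω
        rw [Set.indicator_of_notMem hω, Set.indicator_of_notMem hω]
        have : S ω ≤ φ (S ω) := by
          rw [hψ]; exact le_min hSβ (le_max_right _ _)
        linarith
    calc ∫ ω, (S ω - φ (S ω)) ∂ℙ
        ≤ ∫ ω, (A.indicator (fun ω => S ω - Sstar) ω + A.indicator (fun _ => -Qb) ω) ∂ℙ :=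
          integral_mono (intS.sub intφ) (ind1.add ind2) hptw
      _ = (∫ ω, A.indicator (fun ω => S ω - Sstar) ω ∂ℙ) + (ℙ A).toReal • (-Qb) := by
          rw [integral_add ind1 ind2, integral_indicator_const _ hAmeas]; rfl
      _ ≤ σ * r2 + max 0 (-Qb) * (2*ε) := by
          have h1 := cs_indicator_aux (fun ω => S ω - Sstar) hSb2 σ (2*ε) hσ0 (by linarith)
            hsqeq.le A hAmeas hPA
          have h2 : (ℙ A).toReal • (-Qb) ≤ max 0 (-Qb) * (2*ε) := by
            rw [smul_eq_mul]
            nlinarith [ENNReal.toReal_nonneg (a := ℙ A), le_max_left 0 (-Qb),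
              le_max_right 0 (-Qb), hPA]
          rw [← hr2def] at h1
          linarith
  -- lower estimate of ∫ (φ S - S)
  set Qa := Q (2*ε) with hQadef
  set B := {ω | S ω < α} with hBdef
  have hBmeas : MeasurableSet B := measurableSet_lt hS measurable_const
  have hPB : (ℙ B).toReal ≤ 2*ε := by
    have hsub : B ⊆ {ω | S ω - Sstar ≥ Qa}ᶜ := by
      intro ω hω
      simp only [hBdef, Set.mem_setOf_eq] at hω
      simp only [Set.mem_compl_iff, Set.mem_setOf_eq, not_le]
      have := hα.2
      linarith
    have hle := (ENNReal.toReal_mono (measure_ne_top ℙ _) (measure_mono hsub))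
    rw [hcompl _ (by linarith) (by linarith)] at hle
    linarith
  have hnegSb2 : MemLp (fun ω => Sstar - S ω) 2 ℙ := (memLp_const Sstar).sub hS2
  have hnegsq : ∫ ω, (Sstar - S ω)^2 ∂ℙ = σ^2 := by
    rw [← hsqeq]
    congr 1
    ext ω
    ring
  have intnegSb : Integrable (fun ω => Sstar - S ω) ℙ := (integrable_const _).sub intS
  have hlow : ∫ ω, (φ (S ω) - S ω) ∂ℙ ≤ σ * r2 + max 0 Qa * (2*ε) := by
    have ind1 : Integrable (B.indicator (fun ω => Sstar - S ω)) ℙ := intnegSb.indicator hBmeas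
    have ind2 : Integrable (B.indicator (fun _ => Qa)) ℙ := (integrable_const _).indicator hBmeas
    have hptw : ∀ ω, φ (S ω) - S ω ≤
        B.indicator (fun ω => Sstar - S ω) ω + B.indicator (fun _ => Qa) ω := by
      intro ω
      by_cases hω : ω ∈ B
      · have hSα : S ω < α := hω
        have hnotβ : ¬ (S ω > β) := by push_neg; linarith
        rw [Set.indicator_of_mem hω, Set.indicator_of_mem hω, hφ, if_neg hnotβ, if_pos hSα]
        have := hα.2
        linarith
      · have hαS : α ≤ S ω := not_lt.mp hω
        rw [Set.indicator_of_notMem hω, Set.indicator_of_notMem hω]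
        have : φ (S ω) ≤ S ω := by
          rw [hψ, max_eq_right hαS]; exact min_le_right _ _
        linarith
    calc ∫ ω, (φ (S ω) - S ω) ∂ℙ
        ≤ ∫ ω, (B.indicator (fun ω => Sstar - S ω) ω + B.indicator (fun _ => Qa) ω) ∂ℙ :=
          integral_mono (intφ.sub intS) (ind1.add ind2) hptw
      _ = (∫ ω, B.indicator (fun ω => Sstar - S ω) ω ∂ℙ) + (ℙ B).toReal • Qa := by
          rw [integral_add ind1 ind2, integral_indicator_const _ hBmeas]; rfl
      _ ≤ σ * r2 + max 0 Qa * (2*ε) := by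
          have h1 := cs_indicator_aux (fun ω => Sstar - S ω) hnegSb2 σ (2*ε) hσ0 (by linarith)
            hnegsq.le B hBmeas hPB
          have h2 : (ℙ B).toReal • Qa ≤ max 0 Qa * (2*ε) := by
            rw [smul_eq_mul]
            nlinarith [ENNReal.toReal_nonneg (a := ℙ B), le_max_left 0 Qa,
              le_max_right 0 Qa, hPB]
          rw [← hr2def] at h1
          linarith
  -- assembly
  have hintsub1 : ∫ ω, (S ω - φ (S ω)) ∂ℙ = Sstar - ∫ ω, φ (S ω) ∂ℙ := by
    rw [integral_sub intS intφ, hmean]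
  have hintsub2 : ∫ ω, (φ (S ω) - S ω) ∂ℙ = (∫ ω, φ (S ω) ∂ℙ) - Sstar := by
    rw [integral_sub intφ intS, hmean]
  rw [abs_sub_le_iff, h8]
  constructor
  · have h1 : φ s - ∫ ω, φ (S ω) ∂ℙ ≤ (β - Sstar) + ∫ ω, (S ω - φ (S ω)) ∂ℙ := by
      have := hφle s
      rw [hintsub1]
      linarith
    have h2 : β - Sstar ≤ σ / rε := le_trans hβ.2 bound1
    linarith [hup, bound3]
  · have h1 : (∫ ω, φ (S ω) ∂ℙ) - φ s ≤ (Sstar - α) + ∫ ω, (φ (S ω) - S ω) ∂ℙ := by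
      have := hφge s
      rw [hintsub2]
      linarith
    have h2 : Sstar - α ≤ σ / rε := by
      have := hα.1
      linarith [bound2]
    linarith [hlow, bound4]
end
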